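/- Let Ω₋₁ = [[x,y],[z,w]] and Ω₀ = [[λ,ν],[0,μ]] be 2×2 complex matrices with rank Ω₋₁ = 2, rank Ω₀ = 2 (so λμ ≠ 0), and suppose M₁ is a real number satisfying: M₁ μ̄ = μ̄(−2|ν|² − 2|μ|² + |z|² + |w|²), 0 = μ̄(x z̄ + y w̄ − 2 λ̄ ν), and M₁ ν̄ = ν̄(−2|λ|² − 2|μ|² − 2|ν|² + |x|² + 2|z|² + |w|²) + λ̄(x̄ z + ȳ w). Then ν = 0. -/

import Mathlib

open Complex

/-- For 2×2 matrices `Ω₋₁ = [[x,y],[z,w]]` (rank 2, i.e. `xw − yz ≠ 0`) and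
`Ω₀ = [[λ,ν],[0,μ]]` (rank 2, i.e. `λμ ≠ 0`), if a real number `M₁` satisfies the
system (6.6), then `ν = 0`. -/
theorem nu_vanishes
    (x y z w lam mu nu : ℂ) (M₁ : ℝ)
    (hrank₁ : x * w - y * z ≠ 0) (hlam : lam ≠ 0) (hmu : mu ≠ 0)
    (e1 : (M₁ : ℂ) * (starRingEnd ℂ) mu =
      (starRingEnd ℂ) mu * ((-2 * ‖nu‖ ^ 2 - 2 * ‖mu‖ ^ 2 +
        ‖z‖ ^ 2 + ‖w‖ ^ 2 : ℝ) : ℂ))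
    (e2 : (0 : ℂ) = (starRingEnd ℂ) mu *
      (x * (starRingEnd ℂ) z + y * (starRingEnd ℂ) w - 2 * (starRingEnd ℂ) lam * nu))
    (e3 : (M₁ : ℂ) * (starRingEnd ℂ) nu =
      (starRingEnd ℂ) nu * ((-2 * ‖lam‖ ^ 2 - 2 * ‖mu‖ ^ 2 -
          2 * ‖nu‖ ^ 2 + ‖x‖ ^ 2 + 2 * ‖z‖ ^ 2 +
          ‖w‖ ^ 2 : ℝ) : ℂ) +
        (starRingEnd ℂ) lam * ((starRingEnd ℂ) x * z + (starRingEnd ℂ) y * w)) :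
    nu = 0 := by
  by_contra hnu
  have hcmu : (starRingEnd ℂ) mu ≠ 0 := by simpa using hmu
  have hcnu : (starRingEnd ℂ) nu ≠ 0 := by simpa using hnu
  -- cancel μ̄ in e1
  have e1' : (M₁ : ℂ) = ((-2 * ‖nu‖ ^ 2 - 2 * ‖mu‖ ^ 2 +
      ‖z‖ ^ 2 + ‖w‖ ^ 2 : ℝ) : ℂ) :=
    mul_left_cancel₀ hcmu (by rw [← e1]; ring)
  -- cancel μ̄ in e2
  have e2' : x * (starRingEnd ℂ) z + y * (starRingEnd ℂ) w = 2 * (starRingEnd ℂ) lam * nu := by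
    have h := e2.symm
    rcases mul_eq_zero.mp h with h1 | h1
    · exact absurd h1 hcmu
    · exact sub_eq_zero.mp h1
  -- conjugate of e2'
  have e2c : (starRingEnd ℂ) x * z + (starRingEnd ℂ) y * w =
      2 * lam * (starRingEnd ℂ) nu := by
    have h := congrArg (starRingEnd ℂ) e2'
    simp only [map_add, map_mul, Complex.conj_conj, map_ofNat] at h
    linear_combination h
  have hl : lam * (starRingEnd ℂ) lam = ((‖lam‖ ^ 2 : ℝ) : ℂ) := by
    rw [Complex.mul_conj, Complex.sq_norm]
  -- key equation
  have key : (starRingEnd ℂ) nu * ((‖x‖ ^ 2 + ‖z‖ ^ 2 : ℝ) : ℂ) = 0 := by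
    push_cast at e1' e3 hl ⊢
    linear_combination (starRingEnd ℂ) nu * e1' - e3 - (starRingEnd ℂ) lam * e2c -
      2 * (starRingEnd ℂ) nu * hl
  rcases mul_eq_zero.mp key with h | h
  · exact hcnu h
  · have h' : (‖x‖ ^ 2 + ‖z‖ ^ 2 : ℝ) = 0 := by exact_mod_cast h
    have hx : x = 0 := by
      have : ‖x‖ = 0 := by nlinarith [sq_nonneg (‖x‖), sq_nonneg (‖z‖), norm_nonneg x, norm_nonneg z]
      simpa using this
    have hz : z = 0 := by
      have : ‖z‖ = 0 := by nlinarith [sq_nonneg (‖x‖), sq_nonneg (‖z‖), norm_nonneg x, norm_nonneg z]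
      simpa using this
    apply hrank₁
    rw [hx, hz]; ring
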